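/- Fix y ∈ (0,1]. For x ∈ (0,1] and z ∈ (0,2], define g(z) = 4/z - 2(1 - exp(-z))/(z + exp(-z) - 1). Then g is decreasing on (0,2]. -/

import Mathlib

open Real Finset

/-- partial sums of the series for `exp (-x)` -/
private noncomputable def S (n : ℕ) (x : ℝ) : ℝ := ∑ k ∈ Finset.range (n + 1), (-x) ^ k / (Nat.factorial k)

private lemma S_zero_eval (x : ℝ) : S 0 x = 1 := by simp [S]

private lemma S_at_zero (n : ℕ) : S n 0 = 1 := by
  induction n with
  | zero => simp [S]
  | succ n ih =>
    rw [S, Finset.sum_range_succ, ← S, ih]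
    norm_num

private lemma S_hasDerivAt (n : ℕ) (x : ℝ) : HasDerivAt (S (n + 1)) (-(S n x)) x := by
  have h : ∀ k : ℕ, HasDerivAt (fun y : ℝ => (-y) ^ k / (Nat.factorial k))
      ((k : ℝ) * (-x) ^ (k - 1) * (-1) / (Nat.factorial k)) x := by
    intro k
    exact (((hasDerivAt_id x).neg.pow k)).div_const _
  have hsum : HasDerivAt (fun y : ℝ => ∑ k ∈ Finset.range (n + 2), (-y) ^ k / (Nat.factorial k))
      (∑ k ∈ Finset.range (n + 2), (k : ℝ) * (-x) ^ (k - 1) * (-1) / (Nat.factorial k)) x :=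
    HasDerivAt.fun_sum fun k _ => h k
  have hval : (∑ k ∈ Finset.range (n + 2), (k : ℝ) * (-x) ^ (k - 1) * (-1) / (Nat.factorial k))
      = -(S n x) := by
    rw [Finset.sum_range_succ' (fun k => (k : ℝ) * (-x) ^ (k - 1) * (-1) / (Nat.factorial k))]
    simp only [Nat.cast_zero, zero_mul, Nat.factorial_zero, Nat.cast_one, div_one, add_zero]
    rw [S, ← Finset.sum_neg_distrib]
    apply Finset.sum_congr rfl
    intro k _
    have hfac : (Nat.factorial (k + 1) : ℝ) = (k + 1) * Nat.factorial k := by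
      rw [Nat.factorial_succ]; push_cast; ring
    have hfk : (Nat.factorial k : ℝ) ≠ 0 := Nat.cast_ne_zero.2 (Nat.factorial_ne_zero k)
    have hk1 : ((k : ℝ) + 1) ≠ 0 := by positivity
    simp only [Nat.add_sub_cancel, Nat.cast_add, Nat.cast_one, hfac]
    field_simp
  rw [← hval]
  exact hsum

private lemma nonneg_of_hasDerivAt {f f' : ℝ → ℝ} (hd : ∀ x, HasDerivAt f (f' x) x)
    (h0 : f 0 = 0) (hp : ∀ x, 0 ≤ x → 0 ≤ f' x) : ∀ x, 0 ≤ x → 0 ≤ f x := by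
  intro x hx
  have hmono : MonotoneOn f (Set.Ici 0) := by
    apply monotoneOn_of_deriv_nonneg (convex_Ici 0)
    · exact (Differentiable.continuous (fun y => (hd y).differentiableAt)).continuousOn
    · exact fun y _ => (hd y).differentiableAt.differentiableWithinAt
    · intro y hy
      rw [(hd y).deriv]
      rw [interior_Ici] at hy
      exact hp y (le_of_lt hy)
  have := hmono (Set.self_mem_Ici) hx hx
  rwa [h0] at this

private lemma exp_remainder_sign (n : ℕ) :
    ∀ x : ℝ, 0 ≤ x → 0 ≤ (-1 : ℝ) ^ (n + 1) * (Real.exp (-x) - S n x) := by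
  induction n with
  | zero =>
    intro x hx
    rw [S_zero_eval]
    have h1 : Real.exp (-x) ≤ 1 := Real.exp_le_one_iff.2 (by linarith)
    have h2 : ((-1 : ℝ)) ^ (0 + 1) = -1 := by norm_num
    rw [h2]
    nlinarith
  | succ n ih =>
    apply nonneg_of_hasDerivAt
      (f' := fun x => (-1 : ℝ) ^ (n + 1) * (Real.exp (-x) - S n x))
    · intro x
      have h1 : HasDerivAt (fun y : ℝ => Real.exp (-y)) (-Real.exp (-x)) x := by
        simpa using ((hasDerivAt_id x).neg.exp)
      have h2 := (h1.sub (S_hasDerivAt n x)).const_mul ((-1 : ℝ) ^ (n + 1 + 1))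
      exact h2.congr_deriv (by ring)
    · rw [neg_zero, Real.exp_zero, S_at_zero]; ring
    · exact ih

private lemma exp_ge_taylor7 (x : ℝ) (hx : 0 ≤ x) :
    1 - x + x ^ 2 / 2 - x ^ 3 / 6 + x ^ 4 / 24 - x ^ 5 / 120 + x ^ 6 / 720 - x ^ 7 / 5040
      ≤ Real.exp (-x) := by
  have h := exp_remainder_sign 7 x hx
  have hS : S 7 x = 1 - x + x ^ 2 / 2 - x ^ 3 / 6 + x ^ 4 / 24 - x ^ 5 / 120 + x ^ 6 / 720
      - x ^ 7 / 5040 := by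
    simp [S, Finset.sum_range_succ, Nat.factorial]
    ring
  rw [hS] at h
  norm_num at h
  linarith

private lemma denom_pos (z : ℝ) (hz : 0 < z) : 0 < z + Real.exp (-z) - 1 := by
  have := Real.add_one_lt_exp (x := -z) (by linarith)
  linarith

/-- The key polynomial-exponential inequality. -/
private lemma key_ineq (z : ℝ) (hz0 : 0 < z) (hz2 : z < 2) :
    0 < (z ^ 2 - 4 * z + 2) + (z ^ 3 + z ^ 2 + 4 * z - 4) * Real.exp (-z)
        + 2 * Real.exp (-z) ^ 2 := by
  set u := Real.exp (-z) with hu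
  have hL : 1 - z + z ^ 2 / 2 - z ^ 3 / 6 + z ^ 4 / 24 - z ^ 5 / 120 + z ^ 6 / 720
      - z ^ 7 / 5040 ≤ u := exp_ge_taylor7 z hz0.le
  set L : ℝ := 1 - z + z ^ 2 / 2 - z ^ 3 / 6 + z ^ 4 / 24 - z ^ 5 / 120 + z ^ 6 / 720
      - z ^ 7 / 5040 with hLdef
  -- q(L) > 0 via Bernstein certificate
  have hb : (0 : ℝ) ≤ 2 - z := by linarith
  have hqL : 0 < (z ^ 2 - 4 * z + 2) + (z ^ 3 + z ^ 2 + 4 * z - 4) * L + 2 * L ^ 2 := by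
    have e0 : (0:ℝ) ≤ z ^ 6 * (2 - z) ^ 8 := by positivity
    have e1 : (0:ℝ) ≤ z ^ 7 * (2 - z) ^ 7 := by positivity
    have e2 : (0:ℝ) ≤ z ^ 8 * (2 - z) ^ 6 := by positivity
    have e3 : (0:ℝ) ≤ z ^ 9 * (2 - z) ^ 5 := by positivity
    have e4 : (0:ℝ) ≤ z ^ 10 * (2 - z) ^ 4 := by positivity
    have e5 : (0:ℝ) ≤ z ^ 11 * (2 - z) ^ 3 := by positivity
    have e6 : (0:ℝ) ≤ z ^ 12 * (2 - z) ^ 2 := by positivity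
    have e7 : (0:ℝ) ≤ z ^ 13 * (2 - z) := by positivity
    have e8 : (0:ℝ) < z ^ 14 := by positivity
    have hiden : (z ^ 2 - 4 * z + 2) + (z ^ 3 + z ^ 2 + 4 * z - 4) * L + 2 * L ^ 2
        = (1/18432) * (z ^ 6 * (2 - z) ^ 8) + (1/2880) * (z ^ 7 * (2 - z) ^ 7)
          + (91/92160) * (z ^ 8 * (2 - z) ^ 6) + (1571/967680) * (z ^ 9 * (2 - z) ^ 5)
          + (16259/9676800) * (z ^ 10 * (2 - z) ^ 4) + (179/161280) * (z ^ 11 * (2 - z) ^ 3)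
          + (12979/29030400) * (z ^ 12 * (2 - z) ^ 2) + (277/2903040) * (z ^ 13 * (2 - z))
          + (361/50803200) * z ^ 14 := by
      rw [hLdef]; ring
    rw [hiden]
    positivity
  -- q is increasing in u for u ≥ L
  have hmonoq : 0 ≤ ((z ^ 2 - 4 * z + 2) + (z ^ 3 + z ^ 2 + 4 * z - 4) * u + 2 * u ^ 2)
      - ((z ^ 2 - 4 * z + 2) + (z ^ 3 + z ^ 2 + 4 * z - 4) * L + 2 * L ^ 2) := by
    have hfac : ((z ^ 2 - 4 * z + 2) + (z ^ 3 + z ^ 2 + 4 * z - 4) * u + 2 * u ^ 2)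
        - ((z ^ 2 - 4 * z + 2) + (z ^ 3 + z ^ 2 + 4 * z - 4) * L + 2 * L ^ 2)
        = (u - L) * ((z ^ 3 + z ^ 2 + 4 * z - 4) + 2 * (u + L)) := by ring
    rw [hfac]
    apply mul_nonneg (by linarith)
    have h4L : 0 ≤ (z ^ 3 + z ^ 2 + 4 * z - 4) + 4 * L := by
      rw [hLdef]
      nlinarith [sq_nonneg z, pow_pos hz0 4, pow_pos hz0 6, sq_nonneg (z*(2-z)),
        mul_nonneg (pow_nonneg hz0.le 4) hb, mul_nonneg (pow_nonneg hz0.le 6) hb]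
    linarith
  linarith

theorem stmt_17 (g : ℝ → ℝ)
    (hg : ∀ z, g z = 4 / z - 2 * (1 - Real.exp (-z)) / (z + Real.exp (-z) - 1)) :
    StrictAntiOn g (Set.Ioc 0 2) := by
  have hgfun : g = fun z => 4 / z - 2 * (1 - Real.exp (-z)) / (z + Real.exp (-z) - 1) :=
    funext hg
  subst hgfun
  apply strictAntiOn_of_deriv_neg (convex_Ioc 0 2)
  · -- continuity
    apply ContinuousOn.sub
    · exact ContinuousOn.div continuousOn_const continuousOn_id
        (fun z hz => ne_of_gt hz.1)
    · apply ContinuousOn.div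
      · exact (continuous_const.mul
          (continuous_const.sub (Real.continuous_exp.comp continuous_neg))).continuousOn
      · exact ((continuous_id.add (Real.continuous_exp.comp continuous_neg)).sub
          continuous_const).continuousOn
      · exact fun z hz => ne_of_gt (denom_pos z hz.1)
  · intro z hz
    rw [interior_Ioc] at hz
    obtain ⟨hz0, hz2⟩ := hz
    set u := Real.exp (-z) with hu
    have hupos : 0 < u := Real.exp_pos _
    have hd : 0 < z + u - 1 := denom_pos z hz0
    -- derivative computation
    have h1 : HasDerivAt (fun y : ℝ => 4 / y) (-(4 / z ^ 2)) z := by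
      simpa [div_eq_mul_inv] using (hasDerivAt_inv (ne_of_gt hz0)).const_mul (4 : ℝ)
    have hexp : HasDerivAt (fun y : ℝ => Real.exp (-y)) (-u) z := by
      simpa using ((hasDerivAt_id z).neg.exp)
    have hnum : HasDerivAt (fun y : ℝ => 2 * (1 - Real.exp (-y))) (2 * u) z := by
      have := (hasDerivAt_const z (1:ℝ)).sub hexp
      simpa using this.const_mul (2 : ℝ)
    have hden : HasDerivAt (fun y : ℝ => y + Real.exp (-y) - 1) (1 + -u) z := by
      simpa using ((hasDerivAt_id z).add hexp).sub_const (1 : ℝ)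
    have hq : HasDerivAt (fun y : ℝ => 2 * (1 - Real.exp (-y)) / (y + Real.exp (-y) - 1))
        ((2 * u * (z + u - 1) - 2 * (1 - u) * (1 + -u)) / (z + u - 1) ^ 2) z :=
      hnum.div hden (ne_of_gt hd)
    have hD : HasDerivAt (fun y : ℝ => 4 / y - 2 * (1 - Real.exp (-y)) / (y + Real.exp (-y) - 1))
        (-(4 / z ^ 2) - (2 * u * (z + u - 1) - 2 * (1 - u) * (1 + -u)) / (z + u - 1) ^ 2) z :=
      h1.sub hq
    rw [hD.deriv]
    -- show the derivative is negative
    have hF : 0 < (z ^ 2 - 4 * z + 2) + (z ^ 3 + z ^ 2 + 4 * z - 4) * u + 2 * u ^ 2 :=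
      key_ineq z hz0 hz2
    have hz2pos : (0:ℝ) < z ^ 2 := by positivity
    have hd2 : (0:ℝ) < (z + u - 1) ^ 2 := by positivity
    have hrw : -(4 / z ^ 2) - (2 * u * (z + u - 1) - 2 * (1 - u) * (1 + -u)) / (z + u - 1) ^ 2
        = -((4 * (z + u - 1) ^ 2 + (2 * u * (z + u - 1) - 2 * (1 - u) * (1 + -u)) * z ^ 2)
            / (z ^ 2 * (z + u - 1) ^ 2)) := by
      field_simp
      ring
    rw [hrw, neg_lt_zero]
    apply div_pos _ (by positivity)
    nlinarith [hF]
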